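/- Let $q$ be a prime power and let $f(t) \in \mathbb{F}_q[t]$ be a nonzero polynomial of degree at most $n$ (with $n \geq 1$). Then there exists a finite field $\mathbb{F}$ with $2n < |\mathbb{F}| \leq 2nq$ and a ring homomorphism $\phi : \mathbb{F}_q[t] \to \mathbb{F}$ such that $\phi(f(t)) \neq 0$. -/

import Mathlib

open Polynomial in
lemma charP_of_card' (Fq : Type) [Field Fq] [Fintype Fq] (p m : ℕ) (hp : p.Prime) (hm : 0 < m)
    (hcard : Fintype.card Fq = p ^ m) : CharP Fq p := by
  have h1 : CharP Fq (ringChar Fq) := ringChar.charP Fq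
  have hp' : (ringChar Fq).Prime := CharP.char_is_prime Fq _
  haveI : Fact (ringChar Fq).Prime := ⟨hp'⟩
  obtain ⟨k, hk⟩ := FiniteField.card Fq (ringChar Fq)
  have : p = ringChar Fq := by
    have := hk.2
    rw [hcard] at this
    have hd : p ∣ (ringChar Fq) ^ (k : ℕ) := this ▸ dvd_pow_self p hm.ne'
    exact ((Nat.prime_dvd_prime_iff_eq hp hp').mp (hp.dvd_of_dvd_pow hd))
  exact this ▸ h1

open Polynomial in
lemma splittingField_card' (Fq : Type) [Field Fq] [Fintype Fq] (p m d : ℕ)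
    [hp : Fact p.Prime] [CharP Fq p] (hm : 0 < m) (hd : 0 < d)
    (hcard : Fintype.card Fq = p ^ m) :
    Nat.card (SplittingField (X ^ p ^ (m * d) - X : Fq[X])) = p ^ (m * d) := by
  set F := SplittingField (X ^ p ^ (m * d) - X : Fq[X]) with hF
  set g : Fq[X] := X ^ p ^ (m * d) - X with hg
  haveI : CharP F p := (Algebra.charP_iff Fq F p).mp inferInstance
  have hmd : m * d ≠ 0 := by positivity
  haveI : Finite F := Module.finite_of_finite Fq
  haveI : Fintype F := Fintype.ofFinite F
  have aux : g ≠ 0 := FiniteField.X_pow_card_pow_sub_X_ne_zero _ hmd hp.out.one_lt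
  have hsep : g.Separable :=
    galois_poly_separable p (p ^ (m * d)) (dvd_pow_self p hmd)
  have key : Fintype.card (g.rootSet F) = g.natDegree :=
    card_rootSet_eq_natDegree hsep (SplittingField.splits g)
  have nd : g.natDegree = p ^ (m * d) :=
    FiniteField.X_pow_card_pow_sub_X_natDegree_eq _ hmd hp.out.one_lt
  rw [nd] at key
  suffices huniv : g.rootSet F = Set.univ by
    rw [Nat.card_eq_fintype_card, ← key]
    exact (Fintype.card_congr ((Equiv.setCongr huniv).trans (Equiv.Set.univ F))).symm
  rw [Set.eq_univ_iff_forall]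
  suffices h : ∀ (x : F) (_ : x ∈ (⊤ : Subalgebra Fq F)), x ∈ g.rootSet F by
    intro x; exact h x trivial
  rw [← SplittingField.adjoin_rootSet]
  simp_rw [Algebra.mem_adjoin_iff]
  intro x hx
  refine Subring.closure_induction ?_ ?_ ?_ ?_ ?_ ?_ hx <;> simp_rw [mem_rootSet_of_ne aux]
  · rintro x (⟨r, rfl⟩ | hx)
    · simp only [g, hg, map_sub, map_pow, aeval_X]
      have hr : r ^ p ^ (m * d) = r := by
        have h1 : p ^ (m * d) = Fintype.card Fq ^ d := by rw [hcard, ← pow_mul]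
        rw [h1, FiniteField.pow_card_pow]
      rw [← map_pow, hr, sub_self]
    · rwa [mem_rootSet_of_ne aux] at hx
  · rw [← coeff_zero_eq_aeval_zero']
    simp only [g, hg, coeff_X_pow, coeff_X_zero, sub_zero, _root_.map_eq_zero, ite_eq_right_iff,
      one_ne_zero, coeff_sub]
    intro hn
    have := pow_pos hp.out.pos (m * d)
    omega
  · simp [g, hg]
  · intro x y _ _ hx hy
    simp only [g, hg, aeval_X_pow, aeval_X, map_sub, sub_eq_zero] at *
    rw [add_pow_char_pow, hx, hy]
  · intro x _ hx
    simp only [g, hg, sub_eq_zero, aeval_X_pow, aeval_X, map_sub, sub_neg_eq_add] at *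
    rw [neg_pow, neg_one_pow_char_pow, hx]
    ring
  · intro x y _ _ hx hy
    simp only [g, hg, aeval_X_pow, aeval_X, map_sub, mul_pow, sub_eq_zero] at *
    rw [hx, hy]

/-- Auxiliary predicate: `F` is a finite field of size in `(2n, 2nq]` admitting a ring
homomorphism from `Fq[t]` not killing `f`. -/
def GoodTargetField (n q : ℕ) {Fq : Type} [Field Fq] (f : Polynomial Fq)
    (F : Type) [Field F] [Fintype F] : Prop :=
  2 * n < Fintype.card F ∧ Fintype.card F ≤ 2 * n * q ∧
    ∃ φ : Polynomial Fq →+* F, φ f ≠ 0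

/-- For a nonzero `f ∈ 𝔽_q[t]` of degree at most `n`, there is a finite field `F`
with `2n < |F| ≤ 2nq` and a ring homomorphism `𝔽_q[t] → F` not killing `f`. -/
theorem stmt2 (q : ℕ) (hq : ∃ p m : ℕ, p.Prime ∧ 0 < m ∧ q = p ^ m)
    (Fq : Type) [Field Fq] [Fintype Fq] (hcard : Fintype.card Fq = q)
    (n : ℕ) (hn : 1 ≤ n) (f : Polynomial Fq) (hf : f ≠ 0) (hdeg : f.natDegree ≤ n) :
    ∃ (F : Type) (iF : Field F) (iFin : Fintype F),
      @GoodTargetField n q Fq _ f F iF iFin := by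
  open Polynomial in
  obtain ⟨p, m, hp, hm, rfl⟩ := hq
  haveI : Fact p.Prime := ⟨hp⟩
  haveI : CharP Fq p := charP_of_card' Fq p m hp hm hcard
  have hq2 : 2 ≤ p ^ m := hp.two_le.trans (Nat.le_self_pow hm.ne' p)
  have hex : ∃ d, 2 * n < (p ^ m) ^ d := by
    refine ⟨2 * n, ?_⟩
    calc 2 * n < 2 ^ (2 * n) := Nat.lt_two_pow_self
    _ ≤ (p ^ m) ^ (2 * n) := Nat.pow_le_pow_left hq2 _
  set d := Nat.find hex with hdd
  have hd1 : 2 * n < (p ^ m) ^ d := Nat.find_spec hex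
  have hd0 : 0 < d := by
    rcases Nat.eq_zero_or_pos d with h | h
    · rw [h, pow_zero] at hd1; omega
    · exact h
  have hmin : (p ^ m) ^ (d - 1) ≤ 2 * n := by
    have := Nat.find_min hex (m := d - 1) (by omega)
    omega
  have hupper : (p ^ m) ^ d ≤ 2 * n * p ^ m := by
    calc (p ^ m) ^ d = (p ^ m) ^ (d - 1) * p ^ m := by
          rw [← pow_succ]; congr 1; omega
    _ ≤ 2 * n * p ^ m := Nat.mul_le_mul_right _ hmin
  set F := SplittingField (X ^ p ^ (m * d) - X : Fq[X]) with hF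
  haveI : Finite F := Module.finite_of_finite Fq
  haveI iFin : Fintype F := Fintype.ofFinite F
  have hcardF : Fintype.card F = (p ^ m) ^ d := by
    rw [← Nat.card_eq_fintype_card, splittingField_card' Fq p m d hm hd0 hcard, pow_mul]
  -- find a point where f doesn't vanish
  set fF : F[X] := f.map (algebraMap Fq F) with hfF
  have hfF0 : fF ≠ 0 := Polynomial.map_ne_zero hf
  have hlt : (fF.natDegree : Cardinal) < Cardinal.mk F := by
    rw [Cardinal.mk_fintype]
    have : fF.natDegree < Fintype.card F := by
      rw [hfF, natDegree_map]
      omega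
    exact_mod_cast this
  obtain ⟨r, hr⟩ := fF.exists_eval_ne_zero_of_natDegree_lt_card hfF0 hlt
  refine ⟨F, inferInstance, iFin, ?_, ?_, (aeval r).toRingHom, ?_⟩
  · omega
  · omega
  · have : (aeval r).toRingHom f = fF.eval r := by
      rw [hfF, eval_map]; rfl
    rw [this]
    exact hr
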